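/- Let (X, ⪯) be a simple prefix order. Then X∞ equipped with the Scott topology, whose open sets are the upward-closed subsets U ⊆ X∞ that are inaccessible by directed joins (for every directed D ⊆ X∞ whose supremum exists and lies in U, D ∩ U ≠ ∅), is a sober space: every irreducible closed set is the closure of a unique point. -/

import Mathlib

open scoped Classical ENNReal

namespace PaperBB

/-! ## Paths -/

/-- Words over the alphabet `A_τ = A ∪ {τ}`; `none` plays the role of the silent action `τ`. -/
abbrev Word (A : Type*) := List (Option A)

/-- A path on `X`: a function whose codomain is `X` and whose domain is the set of all
prefixes of some word `σ ∈ A_τ*`. -/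
structure Path (A : Type*) (X : Type*) where
  word : Word A
  fn : {σ : Word A // σ <+: word} → X

namespace Path

variable {A X Y : Type*}

theorem prefixSnoc (σ : Word A) (a : Option A) : σ <+: σ ++ [a] := ⟨[a], rfl⟩

theorem nilPrefix (w : Word A) : ([] : Word A) <+: w := ⟨w, rfl⟩

/-- The value `p(ε)` of a path at the empty word. -/
def start (p : Path A X) : X := p.fn ⟨[], nilPrefix _⟩

/-- The trace of a path: the maximal word in its domain. -/
def trace (p : Path A X) : Word A := p.word

/-- The last state reached by a path: `last p = p (trace p)`. -/
def last (p : Path A X) : X := p.fn ⟨p.word, List.prefix_refl _⟩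

/-- `Path(f)(p) = f ∘ p`. -/
def map (f : X → Y) (p : Path A X) : Path A Y := ⟨p.word, fun σ => f (p.fn σ)⟩

/-- The prefix order on paths: `p ⪯ q` iff `dom p ⊆ dom q` and `q` agrees with `p` on `dom p`. -/
def le (p q : Path A X) : Prop :=
  ∃ h : p.word <+: q.word, ∀ (σ : Word A) (hσ : σ <+: p.word),
    q.fn ⟨σ, hσ.trans h⟩ = p.fn ⟨σ, hσ⟩

/-- The strict prefix order on paths. -/
def lt (p q : Path A X) : Prop := p.le q ∧ p ≠ q

/-- `φ` is a stutter basis for the path `p`. -/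
def IsStutterBasis (p : Path A X) (φ : {σ : Word A // σ <+: p.word} → Word A) : Prop :=
  φ ⟨[], nilPrefix _⟩ = [] ∧
  (∀ (σ : Word A) (h : σ ++ [(none : Option A)] <+: p.word),
      (p.fn ⟨σ ++ [none], h⟩ = p.fn ⟨σ, (prefixSnoc σ none).trans h⟩ →
        φ ⟨σ ++ [none], h⟩ = φ ⟨σ, (prefixSnoc σ none).trans h⟩) ∧
      (p.fn ⟨σ ++ [none], h⟩ ≠ p.fn ⟨σ, (prefixSnoc σ none).trans h⟩ →
        φ ⟨σ ++ [none], h⟩ = φ ⟨σ, (prefixSnoc σ none).trans h⟩ ++ [none])) ∧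
  (∀ (σ : Word A) (a : A) (h : σ ++ [some a] <+: p.word),
      φ ⟨σ ++ [some a], h⟩ = φ ⟨σ, (prefixSnoc σ (some a)).trans h⟩ ++ [some a])

/-- Auxiliary recursion computing the stutter basis of `p` on the prefix of length `n`. -/
noncomputable def stutterWordAux (p : Path A X) : ℕ → Word A
  | 0 => []
  | n + 1 =>
    if h : n < p.word.length then
      if (p.word.get ⟨n, h⟩) = none ∧
          p.fn ⟨p.word.take (n + 1), List.take_prefix _ _⟩ =
            p.fn ⟨p.word.take n, List.take_prefix _ _⟩ then
        stutterWordAux p n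
      else stutterWordAux p n ++ [p.word.get ⟨n, h⟩]
    else []

/-- The (unique) stutter basis of a path `p`. -/
noncomputable def stutterBasis (p : Path A X) (σ : {σ : Word A // σ <+: p.word}) : Word A :=
  stutterWordAux p σ.1.length

/-- The stutter invariant path `♮p` relative to `p`: its domain is the image of the stutter
basis `φ` and it satisfies `♮p ∘ φ = p`. -/
noncomputable def stutter (p : Path A X) : Path A X where
  word := stutterBasis p ⟨p.word, List.prefix_refl _⟩
  fn := fun w =>
    haveI : Nonempty {σ : Word A // σ <+: p.word} := ⟨⟨[], nilPrefix _⟩⟩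
    p.fn (Function.invFun (stutterBasis p) w.1)

end Path

/-- Stutter equivalence of paths: `p ∼ q` iff `♮p = ♮q`. -/
def StutterEquiv {A X : Type*} (p q : Path A X) : Prop := p.stutter = q.stutter

instance pathSetoid (A X : Type*) : Setoid (Path A X) :=
  ⟨StutterEquiv, ⟨fun _ => rfl, Eq.symm, Eq.trans⟩⟩

/-- The set `Path_∼(X)` of paths up to stutter equivalence. -/
abbrev PathQuot (A X : Type*) := Quotient (pathSetoid A X)

/-- The quotient map `π : Path(X) → Path_∼(X)`. -/
def PathQuot.mk {A X : Type*} (p : Path A X) : PathQuot A X := Quotient.mk _ p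

/-- `Path_∼(f)[p] = [f ∘ p]`. -/
noncomputable def PathQuot.map {A X Y : Type*} (f : X → Y) (c : PathQuot A X) : PathQuot A Y :=
  PathQuot.mk (Path.map f c.out)

/-- The order on `Path_∼(X)`: `[p] ⪯ [q]` iff `♮p ⪯ ♮q`. -/
def PathQuot.le {A X : Type*} (c d : PathQuot A X) : Prop :=
  ∃ p q : Path A X, PathQuot.mk p = c ∧ PathQuot.mk q = d ∧ p.stutter.le q.stutter

/-- The set of words of the shape `τ*aτ*`. -/
def TauStarATauStar {A : Type*} (a : A) (w : Word A) : Prop :=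
  ∃ n m : ℕ, w = List.replicate n none ++ some a :: List.replicate m none

/-! ## Prefix orders, the sobrification `X∞`, Scott topology, valuations -/

section OrderTheory

variable {Z : Type*}

/-- Downward-closed subsets: the closed sets of the Alexandroff topology. -/
def IsDownClosed [Preorder Z] (C : Set Z) : Prop :=
  ∀ ⦃x⦄, x ∈ C → ∀ ⦃y⦄, y ≤ x → y ∈ C

/-- Irreducible closed subsets of the Alexandroff topology. -/
def IsIrredClosed [Preorder Z] (C : Set Z) : Prop :=
  IsDownClosed C ∧ C.Nonempty ∧
    ∀ C₁ C₂ : Set Z, IsDownClosed C₁ → IsDownClosed C₂ → C = C₁ ∪ C₂ → C = C₁ ∨ C = C₂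

/-- A set is non-sober if it is irreducible and closed (w.r.t. the Alexandroff topology) but is
not the closure (the principal ideal) of any single point. -/
def NonSober [Preorder Z] (C : Set Z) : Prop :=
  IsIrredClosed C ∧ ¬ ∃ x : Z, C = {y | y ≤ x}

/-- `X∞`: `X` together with a fresh limit point `∞_C` for every non-sober `C ⊆ X`. -/
def Extended (Z : Type*) [Preorder Z] := Z ⊕ {C : Set Z // NonSober C}

/-- The order `⪯'` on `X∞` extending `⪯` by `∞_C ⪯' ∞_C` and `x ⪯' ∞_C` for `x ∈ C`. -/
def extLE [Preorder Z] : Extended Z → Extended Z → Prop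
  | Sum.inl x, Sum.inl y => x ≤ y
  | Sum.inl x, Sum.inr C => x ∈ C.1
  | Sum.inr _, Sum.inl _ => False
  | Sum.inr C, Sum.inr D => C = D

instance [PartialOrder Z] : PartialOrder (Extended Z) where
  le := extLE
  le_refl a := by
    cases a with
    | inl x => exact le_refl x
    | inr C => exact rfl
  le_trans a b c hab hbc := by
    cases a with
    | inl x =>
      cases b with
      | inl y =>
        cases c with
        | inl z => exact le_trans hab hbc
        | inr C => exact C.2.1.1 hbc hab
      | inr C =>
        cases c with
        | inl z => exact False.elim hbc
        | inr D => exact (show C = D from hbc) ▸ hab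
    | inr C =>
      cases b with
      | inl y => exact False.elim hab
      | inr D =>
        cases c with
        | inl z => exact False.elim hbc
        | inr E => exact (show C = D from hab).trans (show D = E from hbc)
  le_antisymm a b hab hba := by
    cases a with
    | inl x =>
      cases b with
      | inl y => exact congrArg Sum.inl (le_antisymm hab hba)
      | inr C => exact False.elim hba
    | inr C =>
      cases b with
      | inl y => exact False.elim hab
      | inr D => exact congrArg Sum.inr hab

/-- Scott-open subsets: upward closed and inaccessible by directed joins. -/
def ScottOpen {W : Type*} [Preorder W] (U : Set W) : Prop :=
  (∀ ⦃x y⦄, x ∈ U → x ≤ y → y ∈ U) ∧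
  ∀ D : Set W, D.Nonempty → DirectedOn (· ≤ ·) D → ∀ s : W, IsLUB D s → s ∈ U →
    (D ∩ U).Nonempty

/-- Scott-closed subsets. -/
def ScottClosed {W : Type*} [Preorder W] (C : Set W) : Prop := ScottOpen Cᶜ

end OrderTheory

section Valuation

variable {W : Type*}

/-- A valuation on a collection `Op` of open sets: strict, monotone and modular. -/
def IsValuationOn (Op : Set (Set W)) (μ : Set W → ℝ≥0∞) : Prop :=
  μ ∅ = 0 ∧
  (∀ U ∈ Op, ∀ V ∈ Op, U ⊆ V → μ U ≤ μ V) ∧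
  (∀ U ∈ Op, ∀ V ∈ Op, μ U + μ V = μ (U ∪ V) + μ (U ∩ V))

/-- Scott continuity of a valuation: it commutes with unions of directed families of opens. -/
def IsScottContinuousOn (Op : Set (Set W)) (μ : Set W → ℝ≥0∞) : Prop :=
  ∀ 𝒟 : Set (Set W), 𝒟.Nonempty → (∀ U ∈ 𝒟, U ∈ Op) → DirectedOn (· ⊆ ·) 𝒟 →
    μ (⋃₀ 𝒟) = ⨆ U ∈ 𝒟, μ U

/-- Local finiteness: every point has a finitely valued open neighbourhood. -/
def IsLocallyFiniteOn (Op : Set (Set W)) (μ : Set W → ℝ≥0∞) : Prop :=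
  ∀ x : W, ∃ U ∈ Op, x ∈ U ∧ μ U < ⊤

/-- The open sets of the Alexandroff topology of a preorder: the upward-closed sets. -/
def UpClosedSets (W : Type*) [Preorder W] : Set (Set W) :=
  {U | ∀ ⦃x y⦄, x ∈ U → x ≤ y → y ∈ U}

/-- The Scott-open subsets of a preorder. -/
def ScottOpens (W : Type*) [Preorder W] : Set (Set W) := {U | ScottOpen U}

end Valuation

/-- The separation closure `U* = {x ∈ U | cl {x} ∩ U = {x}}` of a subset of a
topological space. -/
def sepClosure {W : Type*} [TopologicalSpace W] (U : Set W) : Set W :=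
  {x ∈ U | closure {x} ∩ U = {x}}

/-! ## Fully probabilistic transition systems -/

section Prob

variable {A X : Type*}

/-- A fully probabilistic transition system. -/
structure FPTS (A X : Type*) where
  P : X → Option A → X → ℝ≥0∞
  le_one : ∀ x a y, P x a y ≤ 1
  finite_support : ∀ x : X, {q : Option A × X | 0 < P x q.1 q.2}.Finite
  total : ∀ x : X,
    (∑' q : Option A × X, P x q.1 q.2) = 0 ∨ (∑' q : Option A × X, P x q.1 q.2) = 1

/-- `p` is an execution from `x`. -/
def IsExec (S : FPTS A X) (x : X) (p : Path A X) : Prop :=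
  p.start = x ∧
  ∀ (σ : Word A) (a : Option A) (h : σ ++ [a] <+: p.word),
    0 < S.P (p.fn ⟨σ, (Path.prefixSnoc σ a).trans h⟩) a (p.fn ⟨σ ++ [a], h⟩)

/-- The weight function `μ_P` on paths: the product of the transition probabilities along an
execution, and `0` on paths that are not executions. -/
noncomputable def pathWeight (S : FPTS A X) (p : Path A X) : ℝ≥0∞ :=
  if ∃ x : X, IsExec S x p then
    ∏ i : Fin p.word.length,
      S.P (p.fn ⟨p.word.take i.1, List.take_prefix _ _⟩)
          (p.word.get i)
          (p.fn ⟨p.word.take (i.1 + 1), List.take_prefix _ _⟩)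
  else 0

/-- `x →_L Y`: executions from `x` with trace in `L`, last state in `Y`, and no strict prefix
witnessing the same. -/
def stepSet (S : FPTS A X) (x : X) (L : Set (Word A)) (Y : Set X) : Set (Path A X) :=
  {p | IsExec S x p ∧ p.trace ∈ L ∧ p.last ∈ Y ∧
       ∀ q : Path A X, q.lt p → q.trace ∈ L → q.last ∉ Y}

/-- `x ⇒_L Y`: paths starting in `x` with trace in `L` and last state in `Y`. -/
def reachSet (x : X) (L : Set (Word A)) (Y : Set X) : Set (Path A X) :=
  {p | p.start = x ∧ p.trace ∈ L ∧ p.last ∈ Y}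

/-- The separation closure `U*` of a set of paths (w.r.t. the prefix order). -/
def sepMin (U : Set (Path A X)) : Set (Path A X) :=
  {p ∈ U | ∀ q ∈ U, q.le p → q = p}

/-- The upward-closed sets of paths: the opens of the Alexandroff topology on `Path(X)`. -/
def pathUpSets (A X : Type*) : Set (Set (Path A X)) :=
  {U | ∀ p ∈ U, ∀ q : Path A X, p.le q → q ∈ U}

end Prob

/-! ## Labelled transition systems -/

section LTS

variable {A X : Type}

/-- `p` is an execution of the labelled transition system `Tr` from `x`. -/
def IsExecLTS (Tr : X → Option A → X → Prop) (x : X) (p : Path A X) : Prop :=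
  p.start = x ∧
  ∀ (σ : Word A) (a : Option A) (h : σ ++ [a] <+: p.word),
    Tr (p.fn ⟨σ, (Path.prefixSnoc σ a).trans h⟩) a (p.fn ⟨σ ++ [a], h⟩)

/-- Branching bisimulation. -/
def IsBranchingBisim (Tr : X → Option A → X → Prop) (R : X → X → Prop) : Prop :=
  Symmetric R ∧
  ∀ (x x' y : X) (a : Option A), Tr x a x' → R x y →
    (a = none ∧ R x' y) ∨
    ∃ y' y'' : X, Relation.ReflTransGen (fun u v => Tr u none v) y y' ∧
      Tr y' a y'' ∧ R x y' ∧ R x' y''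

/-- Two states are branching bisimilar if some branching bisimulation relates them. -/
def BranchingBisimilar (Tr : X → Option A → X → Prop) (x x' : X) : Prop :=
  ∃ R : X → X → Prop, IsBranchingBisim Tr R ∧ R x x'

/-- The path-based coalgebra `α : X → P(Path_∼ X)` of a labelled transition system: the
stutter classes of executions from `x` with trace in `τ*a` (for some `a ∈ A`) or in `τ*`. -/
def ltsAlpha (Tr : X → Option A → X → Prop) (x : X) : Set (PathQuot A X) :=
  {c | ∃ p : Path A X, IsExecLTS Tr x p ∧
    ((∃ (a : A) (n : ℕ), p.word = List.replicate n none ++ [some a]) ∨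
     (∃ n : ℕ, p.word = List.replicate n (none : Option A))) ∧
    c = PathQuot.mk p}

end LTS

/-! ### Auxiliary lemmas for Statement 12 -/

section Stmt12Aux

variable {Z : Type*} [PartialOrder Z]

lemma inl_le_inl {x y : Z} (h : x ≤ y) :
    @LE.le (Extended Z) _ (Sum.inl x) (Sum.inl y) := h

lemma le_of_inl_le_inl {x y : Z}
    (h : @LE.le (Extended Z) _ (Sum.inl x) (Sum.inl y)) : x ≤ y := h

lemma inl_le_inr {x : Z} {F : {C : Set Z // NonSober C}} (h : x ∈ F.1) :
    @LE.le (Extended Z) _ (Sum.inl x) (Sum.inr F) := h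

lemma mem_of_inl_le_inr {x : Z} {F : {C : Set Z // NonSober C}}
    (h : @LE.le (Extended Z) _ (Sum.inl x) (Sum.inr F)) : x ∈ F.1 := h

lemma not_inr_le_inl {F : {C : Set Z // NonSober C}} {x : Z}
    (h : @LE.le (Extended Z) _ (Sum.inr F) (Sum.inl x)) : False := h

lemma inr_le_inr_eq {F G : {C : Set Z // NonSober C}}
    (h : @LE.le (Extended Z) _ (Sum.inr F) (Sum.inr G)) : F = G := h

lemma inr_le_inr_of_eq {F G : {C : Set Z // NonSober C}} (h : F = G) :
    @LE.le (Extended Z) _ (Sum.inr F) (Sum.inr G) := h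

/-- Any irreducible (Alexandroff-)closed subset of a prefix order is a chain. -/
lemma irred_chain (hpre : ∀ x y z : Z, y ≤ x → z ≤ x → y ≤ z ∨ z ≤ y)
    {F : Set Z} (hF : IsIrredClosed F) :
    ∀ a ∈ F, ∀ b ∈ F, a ≤ b ∨ b ≤ a := by
  intro a ha b hb
  by_contra h
  push_neg at h
  obtain ⟨h1, h2⟩ := h
  have hsplit := hF.2.2 {z ∈ F | ¬ a ≤ z} {z ∈ F | ¬ b ≤ z}
    (fun z hz y hy => ⟨hF.1 hz.1 hy, fun hay => hz.2 (hay.trans hy)⟩)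
    (fun z hz y hy => ⟨hF.1 hz.1 hy, fun hby => hz.2 (hby.trans hy)⟩)
    (by
      ext z
      constructor
      · intro hz
        by_cases haz : a ≤ z
        · by_cases hbz : b ≤ z
          · rcases hpre z a b haz hbz with hc | hc
            · exact absurd hc h1
            · exact absurd hc h2
          · exact Or.inr ⟨hz, hbz⟩
        · exact Or.inl ⟨hz, haz⟩
      · rintro (⟨hz, _⟩ | ⟨hz, _⟩) <;> exact hz)
  rcases hsplit with h | h
  · exact (h.subset ha).2 le_rfl
  · exact (h.subset hb).2 le_rfl

lemma nonsober_no_max {B : Set Z} (hB : NonSober B) :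
    ¬ ∃ m ∈ B, ∀ z ∈ B, z ≤ m := by
  rintro ⟨m, hm, hmax⟩
  exact hB.2 ⟨m, Set.Subset.antisymm (fun z hz => hmax z hz) (fun z hz => hB.1.1 hm hz)⟩

lemma chain_max (hsimple : ∀ x : Z, {y : Z | y ≤ x}.Finite)
    {S : Set Z} (hne : S.Nonempty) (hchain : ∀ a ∈ S, ∀ b ∈ S, a ≤ b ∨ b ≤ a)
    (u : Z) (hub : ∀ z ∈ S, z ≤ u) : ∃ m ∈ S, ∀ z ∈ S, z ≤ m := by
  have hfin : S.Finite := (hsimple u).subset (fun z hz => hub z hz)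
  obtain ⟨m, hm, hmax⟩ := Set.Finite.exists_maximalFor id S hfin hne
  refine ⟨m, hm, fun z hz => ?_⟩
  rcases hchain z hz m hm with h | h
  · exact h
  · exact hmax hz h

lemma nonsober_no_ub (hpre : ∀ x y z : Z, y ≤ x → z ≤ x → y ≤ z ∨ z ≤ y)
    (hsimple : ∀ x : Z, {y : Z | y ≤ x}.Finite)
    {B : Set Z} (hB : NonSober B) (u : Z) : ¬ ∀ z ∈ B, z ≤ u := fun h =>
  nonsober_no_max hB (chain_max hsimple hB.1.2.1 (irred_chain hpre hB.1) u h)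

lemma scottClosed_down {W : Type*} [Preorder W] {C : Set W} (hC : ScottClosed C) :
    ∀ ⦃x⦄, x ∈ C → ∀ ⦃y⦄, y ≤ x → y ∈ C := by
  intro x hx y hyx
  by_contra hy
  exact hC.1 hy hyx hx

lemma downset_scottClosed {W : Type*} [Preorder W] (w : W) :
    ScottClosed {v : W | v ≤ w} := by
  refine ⟨fun x y hx hxy hy => hx (le_trans hxy hy), ?_⟩
  intro D _ _ s hlub hs
  by_contra hemp
  exact hs (hlub.2 fun d hd => not_not.mp fun hdw => hemp ⟨d, hd, hdw⟩)

lemma scottClosed_diff {W : Type*} [Preorder W] {C U : Set W}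
    (hC : ScottClosed C) (hU : ScottOpen U) : ScottClosed (C \ U) := by
  constructor
  · intro x y hx hxy hy
    exact hx ⟨scottClosed_down hC hy.1 hxy, fun hxU => hy.2 (hU.1 hxU hxy)⟩
  · intro D hne hdir s hlub hs
    by_cases hsC : s ∈ C
    · have hsU : s ∈ U := by
        by_contra hsU
        exact hs ⟨hsC, hsU⟩
      obtain ⟨d, hd, hdU⟩ := hU.2 D hne hdir s hlub hsU
      exact ⟨d, hd, fun hmem => hmem.2 hdU⟩
    · obtain ⟨d, hd, hdC⟩ := hC.2 D hne hdir s hlub hsC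
      exact ⟨d, hd, fun hmem => hdC hmem.1⟩

lemma irr_meets {W : Type*} [Preorder W] {C U₁ U₂ : Set W} (hC : ScottClosed C)
    (hirr : ∀ C₁ C₂ : Set W, ScottClosed C₁ → ScottClosed C₂ → C = C₁ ∪ C₂ → C = C₁ ∨ C = C₂)
    (hU₁ : ScottOpen U₁) (hU₂ : ScottOpen U₂)
    (h1 : (C ∩ U₁).Nonempty) (h2 : (C ∩ U₂).Nonempty) : (C ∩ (U₁ ∩ U₂)).Nonempty := by
  by_contra hemp
  rw [Set.not_nonempty_iff_eq_empty] at hemp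
  have hsplit : C = (C \ U₁) ∪ (C \ U₂) := by
    apply Set.Subset.antisymm
    · intro x hx
      by_cases hx1 : x ∈ U₁
      · refine Or.inr ⟨hx, fun hx2 => ?_⟩
        exact (Set.eq_empty_iff_forall_notMem.1 hemp x) ⟨hx, hx1, hx2⟩
      · exact Or.inl ⟨hx, hx1⟩
    · rintro x (⟨h, _⟩ | ⟨h, _⟩) <;> exact h
  rcases hirr _ _ (scottClosed_diff hC hU₁) (scottClosed_diff hC hU₂) hsplit with h | h
  · obtain ⟨x, hxC, hxU⟩ := h1
    exact (h.subset hxC).2 hxU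
  · obtain ⟨x, hxC, hxU⟩ := h2
    exact (h.subset hxC).2 hxU

lemma isLUB_nonsober (hpre : ∀ x y z : Z, y ≤ x → z ≤ x → y ≤ z ∨ z ≤ y)
    (hsimple : ∀ x : Z, {y : Z | y ≤ x}.Finite)
    {B : Set Z} (hB : NonSober B) :
    @IsLUB (Extended Z) _ (Sum.inl '' B) (Sum.inr ⟨B, hB⟩) := by
  constructor
  · rintro _ ⟨b, hb, rfl⟩
    exact inl_le_inr hb
  · rintro (u | F) hu
    · exact absurd (fun z hz => le_of_inl_le_inl (hu ⟨z, hz, rfl⟩))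
        (nonsober_no_ub hpre hsimple hB u)
    · have hBF : B ⊆ F.1 := fun b hb => mem_of_inl_le_inr (hu ⟨b, hb, rfl⟩)
      have hFB : F.1 ⊆ B := by
        intro f hf
        by_contra hfB
        refine nonsober_no_ub hpre hsimple hB f (fun b hb => ?_)
        rcases irred_chain hpre F.2.1 f hf b (hBF hb) with h | h
        · exact absurd (hB.1.1 hb h) hfB
        · exact h
      exact inr_le_inr_of_eq (Subtype.ext (Set.Subset.antisymm hBF hFB))

lemma mem_of_scottClosed_nonsober (hpre : ∀ x y z : Z, y ≤ x → z ≤ x → y ≤ z ∨ z ≤ y)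
    (hsimple : ∀ x : Z, {y : Z | y ≤ x}.Finite)
    {C : Set (Extended Z)} (hC : ScottClosed C)
    {B : Set Z} (hB : NonSober B) (hsub : ∀ b ∈ B, Sum.inl b ∈ C) :
    (Sum.inr ⟨B, hB⟩ : Extended Z) ∈ C := by
  by_contra hs
  have hdir : DirectedOn (· ≤ ·) (Sum.inl '' B : Set (Extended Z)) := by
    rintro _ ⟨a, ha, rfl⟩ _ ⟨b, hb, rfl⟩
    rcases irred_chain hpre hB.1 a ha b hb with h | h
    · exact ⟨Sum.inl b, ⟨b, hb, rfl⟩, inl_le_inl h, le_refl _⟩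
    · exact ⟨Sum.inl a, ⟨a, ha, rfl⟩, le_refl _, inl_le_inl h⟩
  obtain ⟨d, hd, hdC⟩ := hC.2 (Sum.inl '' B) (hB.1.2.1.image _) hdir _
    (isLUB_nonsober hpre hsimple hB) hs
  obtain ⟨b, hb, rfl⟩ := hd
  exact hdC (hsub b hb)

lemma lub_cases (hpre : ∀ x y z : Z, y ≤ x → z ≤ x → y ≤ z ∨ z ≤ y)
    (hsimple : ∀ x : Z, {y : Z | y ≤ x}.Finite)
    {D : Set (Extended Z)} (hne : D.Nonempty)
    (hdir : DirectedOn (· ≤ ·) D) {s : Extended Z} (hlub : IsLUB D s) :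
    s ∈ D ∨ ∃ (B : Set Z) (hB : NonSober B), s = Sum.inr ⟨B, hB⟩ ∧
      ∀ b ∈ B, ∃ d, Sum.inl d ∈ D ∧ b ≤ d := by
  cases s with
  | inl u =>
    left
    have hshape : ∀ d ∈ D, ∃ z : Z, d = Sum.inl z ∧ z ≤ u := by
      intro d hd
      cases d with
      | inl z => exact ⟨z, rfl, le_of_inl_le_inl (hlub.1 hd)⟩
      | inr F => exact absurd (hlub.1 hd) (fun h => not_inr_le_inl h)
    set D₀ : Set Z := {z : Z | Sum.inl z ∈ D} with hD₀def
    have hD₀ne : D₀.Nonempty := by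
      obtain ⟨d, hd⟩ := hne
      obtain ⟨z, rfl, _⟩ := hshape d hd
      exact ⟨z, hd⟩
    have hD₀chain : ∀ a ∈ D₀, ∀ b ∈ D₀, a ≤ b ∨ b ≤ a := by
      intro a ha b hb
      obtain ⟨e, he, hae, hbe⟩ := hdir _ ha _ hb
      obtain ⟨v, rfl, _⟩ := hshape e he
      exact hpre v a b (le_of_inl_le_inl hae) (le_of_inl_le_inl hbe)
    obtain ⟨m, hm, hmax⟩ := chain_max hsimple hD₀ne hD₀chain u
      (fun z hz => le_of_inl_le_inl (hlub.1 hz))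
    have hub : (Sum.inl m : Extended Z) ∈ upperBounds D := by
      intro d hd
      obtain ⟨z, rfl, _⟩ := hshape d hd
      exact inl_le_inl (hmax z hd)
    have h3 := le_antisymm (hlub.2 hub) (hlub.1 hm)
    rw [h3]
    exact hm
  | inr E =>
    by_cases hmem : Sum.inr E ∈ D
    · exact Or.inl hmem
    · right
      have hshape : ∀ d ∈ D, ∃ z : Z, d = Sum.inl z ∧ z ∈ E.1 := by
        intro d hd
        cases d with
        | inl z => exact ⟨z, rfl, mem_of_inl_le_inr (hlub.1 hd)⟩
        | inr F =>
          have hFE : F = E := inr_le_inr_eq (hlub.1 hd)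
          exact absurd (hFE ▸ hd) hmem
      refine ⟨E.1, E.2, rfl, ?_⟩
      intro e he
      by_contra hno
      push_neg at hno
      have hub : (Sum.inl e : Extended Z) ∈ upperBounds D := by
        intro d hd
        obtain ⟨z, rfl, hzE⟩ := hshape d hd
        rcases irred_chain hpre E.2.1 e he z hzE with h | h
        · exact absurd h (hno z hd)
        · exact inl_le_inl h
      exact not_inr_le_inl (hlub.2 hub)

lemma upset_inl_scottOpen (hpre : ∀ x y z : Z, y ≤ x → z ≤ x → y ≤ z ∨ z ≤ y)
    (hsimple : ∀ x : Z, {y : Z | y ≤ x}.Finite) (b : Z) :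
    ScottOpen {w : Extended Z | @LE.le (Extended Z) _ (Sum.inl b) w} := by
  refine ⟨fun x y hx hxy => le_trans hx hxy, ?_⟩
  intro D hne hdir s hlub hs
  rcases lub_cases hpre hsimple hne hdir hlub with h | ⟨B, hB, rfl, hwit⟩
  · exact ⟨s, h, hs⟩
  · have hs' : b ∈ B := hs
    obtain ⟨d, hd, hbd⟩ := hwit b hs' 
    exact ⟨Sum.inl d, hd, inl_le_inl hbd⟩

end Stmt12Aux

theorem stmt12 {Z : Type*} [PartialOrder Z]
    (hpre : ∀ x y z : Z, y ≤ x → z ≤ x → y ≤ z ∨ z ≤ y)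
    (hsimple : ∀ x : Z, {y : Z | y ≤ x}.Finite)
    (C : Set (Extended Z)) (hC : ScottClosed C) (hne : C.Nonempty)
    (hirr : ∀ C₁ C₂ : Set (Extended Z), ScottClosed C₁ → ScottClosed C₂ →
      C = C₁ ∪ C₂ → C = C₁ ∨ C = C₂) :
    ∃! x : Extended Z, x ∈ C ∧
      ∀ C' : Set (Extended Z), ScottClosed C' → x ∈ C' → C ⊆ C' := by
  have hdc := scottClosed_down hC
  set B : Set Z := {z : Z | Sum.inl z ∈ C} with hBdef
  have hBdown : ∀ ⦃a⦄, a ∈ B → ∀ ⦃b⦄, b ≤ a → b ∈ B := fun a ha b hba =>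
    hdc ha (inl_le_inl hba)
  have hBne : B.Nonempty := by
    obtain ⟨w, hw⟩ := hne
    cases w with
    | inl z => exact ⟨z, hw⟩
    | inr F =>
      obtain ⟨f, hf⟩ := F.2.1.2.1
      exact ⟨f, hdc hw (inl_le_inr hf)⟩
  have hBchain : ∀ a ∈ B, ∀ b ∈ B, a ≤ b ∨ b ≤ a := by
    intro a ha b hb
    obtain ⟨w, hwC, hwa, hwb⟩ := irr_meets hC hirr (upset_inl_scottOpen hpre hsimple a)
      (upset_inl_scottOpen hpre hsimple b)
      ⟨Sum.inl a, ha, inl_le_inl (le_refl a)⟩ ⟨Sum.inl b, hb, inl_le_inl (le_refl b)⟩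
    cases w with
    | inl u => exact hpre u a b (le_of_inl_le_inl hwa) (le_of_inl_le_inl hwb)
    | inr F => exact irred_chain hpre F.2.1 a (mem_of_inl_le_inr hwa) b (mem_of_inl_le_inr hwb)
  by_cases hmax : ∃ m ∈ B, ∀ z ∈ B, z ≤ m
  · obtain ⟨m, hm, hmub⟩ := hmax
    have hCsub : ∀ w ∈ C, w ≤ Sum.inl m := by
      intro w hw
      cases w with
      | inl z => exact inl_le_inl (hmub z hw)
      | inr F =>
        exfalso
        have hFsub : ∀ f ∈ F.1, f ∈ B := fun f hf =>
          hdc hw (inl_le_inr hf)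
        exact nonsober_no_max F.2 (chain_max hsimple F.2.1.2.1 (irred_chain hpre F.2.1)
          m (fun z hz => hmub z (hFsub z hz)))
    refine ⟨Sum.inl m, ⟨hm, ?_⟩, ?_⟩
    · intro C' hC' hmC' w hw
      exact scottClosed_down hC' hmC' (hCsub w hw)
    · rintro y ⟨hyC, hyprop⟩
      have hCy : C ⊆ {v : Extended Z | v ≤ y} :=
        hyprop _ (downset_scottClosed y) (show y ≤ y from le_refl y)
      exact le_antisymm (hCsub y hyC) (hCy hm)
  · have hB : NonSober B := by
      refine ⟨⟨hBdown, hBne, ?_⟩, ?_⟩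
      · intro C₁ C₂ h₁ h₂ heq
        by_contra hboth
        push_neg at hboth
        have hC₁B : C₁ ⊆ B := heq ▸ Set.subset_union_left
        have hC₂B : C₂ ⊆ B := heq ▸ Set.subset_union_right
        obtain ⟨b₁, hb₁B, hb₁⟩ : ∃ b, b ∈ B ∧ b ∉ C₁ := by
          by_contra h
          push_neg at h
          exact hboth.1 (Set.Subset.antisymm h hC₁B)
        obtain ⟨b₂, hb₂B, hb₂⟩ : ∃ b, b ∈ B ∧ b ∉ C₂ := by
          by_contra h
          push_neg at h
          exact hboth.2 (Set.Subset.antisymm h hC₂B)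
        have hb₁C₂ : b₁ ∈ C₂ := by
          rcases heq.subset hb₁B with h | h
          · exact absurd h hb₁
          · exact h
        have hb₂C₁ : b₂ ∈ C₁ := by
          rcases heq.subset hb₂B with h | h
          · exact h
          · exact absurd h hb₂
        rcases hBchain b₁ hb₁B b₂ hb₂B with h | h
        · exact hb₁ (h₁ hb₂C₁ h)
        · exact hb₂ (h₂ hb₁C₂ h)
      · rintro ⟨x, hx⟩
        refine hmax ⟨x, ?_, fun z hz => ?_⟩
        · rw [hx]
          exact le_refl x
        · exact hx.subset hz
    have hxC : (Sum.inr ⟨B, hB⟩ : Extended Z) ∈ C :=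
      mem_of_scottClosed_nonsober hpre hsimple hC hB (fun b hb => hb)
    refine ⟨Sum.inr ⟨B, hB⟩, ⟨hxC, ?_⟩, ?_⟩
    · intro C' hC' hxC' w hw
      cases w with
      | inl z =>
        exact scottClosed_down hC' hxC' (inl_le_inr hw)
      | inr F =>
        have hFsub : ∀ f ∈ F.1, f ∈ B := fun f hf =>
          hdc hw (inl_le_inr hf)
        exact mem_of_scottClosed_nonsober hpre hsimple hC' F.2
          (fun f hf => scottClosed_down hC' hxC' (inl_le_inr (hFsub f hf)))
    · rintro y ⟨hyC, hyprop⟩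
      have hCy : C ⊆ {v : Extended Z | v ≤ y} :=
        hyprop _ (downset_scottClosed y) (show y ≤ y from le_refl y)
      have hxy := hCy hxC
      cases y with
      | inl u => exact (not_inr_le_inl (F := ⟨B, hB⟩) (x := u) hxy).elim
      | inr G =>
        exact congrArg Sum.inr (inr_le_inr_eq (F := ⟨B, hB⟩) (G := G) hxy).symm

end PaperBB
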